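/- Let p be a prime, let G be a finite group that is a 𝒫₁(p)-group with respect to subgroups H₁ and H₂, and let N be a normal subgroup of G. Then the quotient group G/N is a 𝒫₁(p)-group with respect to the subgroups H₁N/N and H₂N/N (the images of H₁ and H₂ in G/N). -/

import Mathlib

open Pointwise

/-- A group is cyclic or dihedral. -/
def IsCyclicOrDihedral (H : Type*) [Group H] : Prop :=
  IsCyclic H ∨ ∃ n : ℕ, 0 < n ∧ Nonempty (H ≃* DihedralGroup n)

/-- `G` is a `𝒫₀(p)`-group with respect to `(ρ, τ)`. -/
def IsP0 (p : ℕ) {G : Type*} [Group G] (ρ τ : G) : Prop :=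
  orderOf τ = 2 ∧ Subgroup.closure {ρ, τ} = ⊤ ∧
    ∃ n : ℕ, 0 < n ∧
      Nat.card G / orderOf ρ +
          Nat.card G / Nat.card (Subgroup.closure {τ, ρ⁻¹ * τ * ρ} : Subgroup G) +
          p ^ n =
        Nat.card G / 2

/-- `G` is a `𝒫₁(p)`-group with respect to subgroups `H₁` and `H₂`. -/
def IsP1With (p : ℕ) {G : Type*} [Group G] (H₁ H₂ : Subgroup G) : Prop :=
  IsCyclicOrDihedral H₁ ∧ IsCyclicOrDihedral H₂ ∧
    ∃ n : ℕ, Nat.card G = p ^ n * Nat.lcm (Nat.card H₁) (Nat.card H₂)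

/-- `G` is a `𝒫₁(p)`-group. -/
def IsP1 (p : ℕ) (G : Type*) [Group G] : Prop :=
  ∃ H₁ H₂ : Subgroup G, IsP1With p H₁ H₂

/-- `G` is a `𝒫₁⁺(p)`-group with respect to `(ρ, τ)`. -/
def IsP1Plus (p : ℕ) {G : Type*} [Group G] (ρ τ : G) : Prop :=
  orderOf τ ≤ 2 ∧ Subgroup.closure {ρ, τ} = ⊤ ∧
    (Odd p → Subgroup.closure {ρ⁻¹ * τ⁻¹ * ρ * τ, ρ} = ⊤) ∧
    IsP1With p (Subgroup.closure {τ, ρ⁻¹ * τ * ρ}) (Subgroup.zpowers ρ)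

/-- `G` is a `𝒫₂(p)`-group. -/
def IsP2 (p : ℕ) (G : Type*) [Group G] : Prop :=
  ∀ r : ℕ, r.Prime → r ≠ p → ∀ S : Sylow r G, IsCyclicOrDihedral (S : Subgroup G)

/-- `G` is a `𝒫₂⁺(p)`-group with respect to `(ρ, τ)`. -/
def IsP2Plus (p : ℕ) {G : Type*} [Group G] (ρ τ : G) : Prop :=
  orderOf τ ≤ 2 ∧ Subgroup.closure {ρ, τ} = ⊤ ∧
    (Odd p → Subgroup.closure {ρ⁻¹ * τ⁻¹ * ρ * τ, ρ} = ⊤) ∧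
    IsP2 p G

/-- A Hall `{2,3}`-subgroup. -/
def IsHall23 {G : Type*} [Group G] (H : Subgroup G) : Prop :=
  (∃ i j : ℕ, Nat.card H = 2 ^ i * 3 ^ j) ∧ Nat.Coprime H.index 6

/-- A Hall `{2,3}'`-subgroup. -/
def IsHall23' {G : Type*} [Group G] (K : Subgroup G) : Prop :=
  Nat.Coprime (Nat.card K) 6 ∧ ∃ i j : ℕ, K.index = 2 ^ i * 3 ^ j

/-- The projective special linear group of degree 2 over `R`. -/
abbrev ProjSL2 (R : Type*) [CommRing R] : Type _ :=
  Matrix.SpecialLinearGroup (Fin 2) R ⧸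
    Subgroup.center (Matrix.SpecialLinearGroup (Fin 2) R)

/-- The projective general linear group of degree 2 over `R`. -/
abbrev ProjGL2 (R : Type*) [CommRing R] : Type _ :=
  Matrix.GeneralLinearGroup (Fin 2) R ⧸
    Subgroup.center (Matrix.GeneralLinearGroup (Fin 2) R)

lemma key_cd {K : Type*} [Group K] [Finite K] (a b : K) (hb : b * b = 1)
    (hrel : b * a * b = a⁻¹) (hgen : Subgroup.closure {a, b} = ⊤) :
    IsCyclicOrDihedral K := by
  by_cases hba : b ∈ Subgroup.zpowers a
  · left
    have hle : Subgroup.closure {a, b} ≤ Subgroup.zpowers a := by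
      rw [Subgroup.closure_le]
      rintro x (rfl | rfl)
      exacts [Subgroup.mem_zpowers _, hba]
    have htop : Subgroup.zpowers a = ⊤ := top_le_iff.mp (hgen ▸ hle)
    exact ⟨⟨a, fun x => htop.ge (Subgroup.mem_top x)⟩⟩
  · right
    have hm : 0 < orderOf a := orderOf_pos a
    set m := orderOf a with hmdef
    haveI : NeZero m := ⟨hm.ne'⟩
    have hbinv : b⁻¹ = b := inv_eq_of_mul_eq_one_left hb
    set pw : ZMod m → K := fun i => a ^ i.val with hpw
    have hpw_add : ∀ i j : ZMod m, pw (i + j) = pw i * pw j := by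
      intro i j
      show a ^ (i + j).val = a ^ i.val * a ^ j.val
      rw [← pow_add, ZMod.val_add]
      exact pow_mod_orderOf a _
    have hpw_zero : pw 0 = 1 := by simp [hpw, ZMod.val_zero]
    have hpw_neg : ∀ i : ZMod m, pw (-i) = (pw i)⁻¹ := fun i =>
      eq_inv_of_mul_eq_one_left (by rw [← hpw_add, neg_add_cancel, hpw_zero])
    have hconj : ∀ i : ZMod m, b * pw i * b = (pw i)⁻¹ := by
      intro i
      show b * a ^ i.val * b = (a ^ i.val)⁻¹
      calc b * a ^ i.val * b = (b * a * b⁻¹) ^ i.val := by rw [conj_pow, hbinv]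
        _ = (a ^ i.val)⁻¹ := by rw [hbinv] at *; rw [hrel, inv_pow]
    have hswap : ∀ i : ZMod m, pw i * b = b * (pw i)⁻¹ := by
      intro i
      rw [← hconj i, ← mul_assoc, ← mul_assoc, hb, one_mul]
    set f : DihedralGroup m → K := fun x =>
      match x with
      | DihedralGroup.r i => pw i
      | DihedralGroup.sr i => b * pw i with hf
    have hfmul : ∀ x y : DihedralGroup m, f (x * y) = f x * f y := by
      rintro (i | i) (j | j)
      · show pw (i + j) = pw i * pw j
        exact hpw_add i j
      · show b * pw (j - i) = pw i * (b * pw j)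
        rw [← mul_assoc, hswap, mul_assoc, ← hpw_neg, ← hpw_add, neg_add_eq_sub]
      · show b * pw (i + j) = (b * pw i) * pw j
        rw [hpw_add, mul_assoc]
      · show pw (j - i) = (b * pw i) * (b * pw j)
        calc pw (j - i) = pw (-i) * pw j := by rw [← hpw_add, neg_add_eq_sub]
          _ = (b * pw i) * (b * pw j) := by
              rw [hpw_neg, ← hconj i]; group
    set φ : DihedralGroup m →* K := MonoidHom.mk' f hfmul with hφ
    have ha' : a ∈ φ.range := by
      refine ⟨DihedralGroup.r 1, ?_⟩
      show pw 1 = a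
      show a ^ (1 : ZMod m).val = a
      rw [ZMod.val_one_eq_one_mod]
      exact (pow_mod_orderOf a 1).trans (pow_one a)
    have hb' : b ∈ φ.range := by
      refine ⟨DihedralGroup.sr 0, ?_⟩
      show b * pw 0 = b
      rw [hpw_zero, mul_one]
    have hsurj : Function.Surjective φ := by
      rw [← MonoidHom.range_eq_top]
      rw [eq_top_iff, ← hgen, Subgroup.closure_le]
      rintro x (rfl | rfl)
      exacts [ha', hb']
    have hcard : Nat.card K = 2 * m := by
      have h1 : Nat.card K ∣ 2 * m := by
        have := Subgroup.card_dvd_of_surjective φ hsurj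
        rwa [DihedralGroup.nat_card] at this
      have h2 : m ∣ Nat.card K := by
        have := Subgroup.card_subgroup_dvd_card (Subgroup.zpowers a)
        rwa [Nat.card_zpowers] at this
      obtain ⟨t, ht⟩ := h2
      have htd : t ∣ 2 := by
        have h1' : m * t ∣ m * 2 := by rw [← ht, mul_comm m 2]; exact h1
        exact (mul_dvd_mul_iff_left hm.ne').mp h1'
      have ht1 : t ≠ 1 := by
        rintro rfl
        rw [mul_one] at ht
        exact hba ((Subgroup.eq_top_of_card_eq _ ((Nat.card_zpowers a).trans ht.symm)).symm ▸
          Subgroup.mem_top b)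
      rcases (Nat.prime_two.eq_one_or_self_of_dvd t htd) with h | h
      · exact absurd h ht1
      · rw [ht, h, mul_comm]
    have hbij : Function.Bijective φ := by
      refine (Nat.bijective_iff_surjective_and_card φ).mpr ⟨hsurj, ?_⟩
      rw [DihedralGroup.nat_card, hcard]
    exact ⟨m, hm, ⟨(MulEquiv.ofBijective φ hbij).symm⟩⟩

lemma cd_of_surjective {H K : Type*} [Group H] [Group K] [Finite K] (g : H →* K)
    (hg : Function.Surjective g) (h : IsCyclicOrDihedral H) : IsCyclicOrDihedral K := by
  rcases h with h | ⟨n, hn, ⟨e⟩⟩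
  · haveI := h
    exact Or.inl (isCyclic_of_surjective g hg)
  · haveI : NeZero n := ⟨hn.ne'⟩
    have hgen : Subgroup.closure
        {DihedralGroup.r (1 : ZMod n), DihedralGroup.sr (0 : ZMod n)} = ⊤ := by
      rw [eq_top_iff]
      rintro (i | i) -
      · have hr : DihedralGroup.r i = (DihedralGroup.r (1 : ZMod n)) ^ i.val := by
          rw [DihedralGroup.r_one_pow, ZMod.natCast_val, ZMod.cast_id]
        rw [hr]
        exact pow_mem (Subgroup.subset_closure (by simp)) _
      · have hsr : DihedralGroup.sr i =
            DihedralGroup.sr (0 : ZMod n) * (DihedralGroup.r (1 : ZMod n)) ^ i.val := by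
          rw [DihedralGroup.r_one_pow, ZMod.natCast_val, ZMod.cast_id,
            DihedralGroup.sr_mul_r, zero_add]
        rw [hsr]
        exact mul_mem (Subgroup.subset_closure (by simp))
          (pow_mem (Subgroup.subset_closure (by simp)) _)
    set ψ : DihedralGroup n →* K := g.comp e.symm.toMonoidHom with hψdef
    have hψ : Function.Surjective ψ := hg.comp e.symm.surjective
    apply key_cd (ψ (DihedralGroup.r 1)) (ψ (DihedralGroup.sr 0))
    · rw [← map_mul, DihedralGroup.sr_mul_self, map_one]
    · have hd : (DihedralGroup.sr (0 : ZMod n)) * DihedralGroup.r 1 * DihedralGroup.sr 0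
          = (DihedralGroup.r (1 : ZMod n))⁻¹ := by
        rw [DihedralGroup.sr_mul_r, zero_add, DihedralGroup.sr_mul_sr]
        refine eq_inv_of_mul_eq_one_left ?_
        rw [DihedralGroup.r_mul_r]
        simp
      rw [← map_mul, ← map_mul, hd, map_inv]
    · have himg : Subgroup.closure {ψ (DihedralGroup.r 1), ψ (DihedralGroup.sr 0)} =
          Subgroup.map ψ (Subgroup.closure
            {DihedralGroup.r (1 : ZMod n), DihedralGroup.sr (0 : ZMod n)}) := by
        rw [MonoidHom.map_closure]
        congr 1
        simp [Set.image_insert_eq]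
      rw [himg, hgen, Subgroup.map_top_of_surjective ψ hψ]

lemma arith_lemma {p : ℕ} (hp : p.Prime) {g nn c h1 h2 a1 a2 : ℕ} (n : ℕ)
    (hg : g = p ^ n * Nat.lcm h1 h2) (hgc : g = c * nn)
    (hc : 0 < c) (hnn : 0 < nn) (h1p : 0 < h1) (h2p : 0 < h2)
    (ha1 : 0 < a1) (ha2 : 0 < a2)
    (hd1 : a1 ∣ c) (hd2 : a2 ∣ c) (hh1 : h1 ∣ a1 * nn) (hh2 : h2 ∣ a2 * nn) :
    ∃ m, c = p ^ m * Nat.lcm a1 a2 := by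
  set L' := Nat.lcm a1 a2 with hL'def
  have hL'pos : 0 < L' := Nat.pos_of_ne_zero (Nat.lcm_ne_zero ha1.ne' ha2.ne')
  have hL'dvd : L' ∣ c := Nat.lcm_dvd hd1 hd2
  obtain ⟨t, ht⟩ := hL'dvd
  have htpos : 0 < t := by
    rcases Nat.eq_zero_or_pos t with rfl | h
    · rw [mul_zero] at ht; omega
    · exact h
  -- every prime factor of t is p
  have hkey : ∀ {q : ℕ}, q.Prime → q ∣ t → q = p := by
    intro q hq hqt
    by_contra hqp
    -- factorization facts
    have hfc : c.factorization q ≤ L'.factorization q := by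
      have hgf : g.factorization q = max (h1.factorization q) (h2.factorization q) := by
        rw [hg, Nat.factorization_mul (pow_ne_zero n hp.ne_zero)
          (Nat.lcm_ne_zero h1p.ne' h2p.ne'), Nat.factorization_lcm h1p.ne' h2p.ne']
        rw [Finsupp.add_apply, Finsupp.sup_apply, hp.factorization_pow,
          Finsupp.single_apply, if_neg (fun h => hqp h.symm), zero_add]
      have hgf2 : g.factorization q = c.factorization q + nn.factorization q := by
        rw [hgc, Nat.factorization_mul hc.ne' hnn.ne', Finsupp.add_apply]
      have key1 : h1.factorization q ≤ a1.factorization q + nn.factorization q := by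
        have := (Nat.factorization_le_iff_dvd h1p.ne'
          (Nat.mul_ne_zero ha1.ne' hnn.ne')).mpr hh1
        have := this q
        rwa [Nat.factorization_mul ha1.ne' hnn.ne', Finsupp.add_apply] at this
      have key2 : h2.factorization q ≤ a2.factorization q + nn.factorization q := by
        have := (Nat.factorization_le_iff_dvd h2p.ne'
          (Nat.mul_ne_zero ha2.ne' hnn.ne')).mpr hh2
        have := this q
        rwa [Nat.factorization_mul ha2.ne' hnn.ne', Finsupp.add_apply] at this
      have hL'f : L'.factorization q = max (a1.factorization q) (a2.factorization q) := by
        rw [hL'def, Nat.factorization_lcm ha1.ne' ha2.ne', Finsupp.sup_apply]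
      rw [hL'f]
      rcases max_cases (h1.factorization q) (h2.factorization q) with ⟨hmax, _⟩ | ⟨hmax, _⟩ <;>
        rw [hmax] at hgf <;> omega
    have htq : 1 ≤ t.factorization q := (hq.factorization_pos_of_dvd htpos.ne' hqt)
    have hcf : c.factorization q = L'.factorization q + t.factorization q := by
      rw [ht, Nat.factorization_mul hL'pos.ne' htpos.ne', Finsupp.add_apply]
    omega
  have heq := Nat.eq_prime_pow_of_unique_prime_dvd (p := p) htpos.ne' hkey
  refine ⟨t.primeFactorsList.length, ?_⟩
  conv_lhs => rw [ht, heq]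
  exact mul_comm _ _

lemma card_dvd_mul_ker {G Q : Type*} [Group G] [Finite G] [Group Q] (f : G →* Q)
    (H : Subgroup G) : Nat.card H ∣ Nat.card (H.map f) * Nat.card f.ker := by
  have hs := f.subgroupMap_surjective H
  set φ := f.subgroupMap H with hφdef
  have h1 : Nat.card H = Nat.card (H.map f) * Nat.card φ.ker := by
    rw [Subgroup.card_eq_card_quotient_mul_card_subgroup φ.ker]
    congr 1
    exact Nat.card_congr (QuotientGroup.quotientKerEquivOfSurjective φ hs).toEquiv
  have h2 : Nat.card φ.ker ∣ Nat.card f.ker := by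
    have hmem : ∀ x : φ.ker, ((x : H) : G) ∈ f.ker := by
      intro x
      have hx := MonoidHom.mem_ker.mp x.2
      have := congrArg Subtype.val hx
      exact MonoidHom.mem_ker.mpr this
    let j : φ.ker →* f.ker :=
      MonoidHom.mk' (fun x => ⟨((x : H) : G), hmem x⟩) (fun x y => rfl)
    have hj : Function.Injective j := by
      intro x y hxy
      have := congrArg Subtype.val hxy
      exact Subtype.ext (Subtype.ext this)
    exact Subgroup.card_dvd_of_injective j hj
  rw [h1]
  exact mul_dvd_mul_left _ h2


/-- If the finite group `G` is a `𝒫₁(p)`-group with respect to `H₁` and `H₂`, and `N` is a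
normal subgroup of `G`, then `G/N` is a `𝒫₁(p)`-group with respect to `H₁N/N` and `H₂N/N`. -/
theorem stmt4 {G : Type*} [Group G] [Finite G] {p : ℕ} (hp : p.Prime)
    (H₁ H₂ : Subgroup G) (N : Subgroup G) [N.Normal] (h : IsP1With p H₁ H₂) :
    IsP1With p (H₁.map (QuotientGroup.mk' N)) (H₂.map (QuotientGroup.mk' N)) := by
  obtain ⟨hc1, hc2, n, hcard⟩ := h
  refine ⟨cd_of_surjective _ ((QuotientGroup.mk' N).subgroupMap_surjective H₁) hc1,
    cd_of_surjective _ ((QuotientGroup.mk' N).subgroupMap_surjective H₂) hc2, ?_⟩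
  have hker : (QuotientGroup.mk' N).ker = N := QuotientGroup.ker_mk' N
  have hh1 : Nat.card H₁ ∣ Nat.card (H₁.map (QuotientGroup.mk' N)) * Nat.card N := by
    have := card_dvd_mul_ker (QuotientGroup.mk' N) H₁
    rwa [hker] at this
  have hh2 : Nat.card H₂ ∣ Nat.card (H₂.map (QuotientGroup.mk' N)) * Nat.card N := by
    have := card_dvd_mul_ker (QuotientGroup.mk' N) H₂
    rwa [hker] at this
  exact arith_lemma hp n hcard (Subgroup.card_eq_card_quotient_mul_card_subgroup N)
    Nat.card_pos Nat.card_pos Nat.card_pos Nat.card_pos Nat.card_pos Nat.card_pos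
    (Subgroup.card_subgroup_dvd_card _) (Subgroup.card_subgroup_dvd_card _) hh1 hh2
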